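/- If G = (V, E) is a finite simple graph with minimum degree δ(G) ≥ 2, then every minimal double dominating set of G is a co-secure dominating set of G. -/
import Mathlib


/-- `D` is a dominating set of `G`: every vertex outside `D` has a neighbor in `D`. -/
def IsDomSet {V : Type*} (G : SimpleGraph V) (D : Set V) : Prop :=
  ∀ v ∉ D, ∃ u ∈ D, G.Adj u v

/-- `S` is a co-secure dominating set of `G`. -/
def IsCSDS {V : Type*} (G : SimpleGraph V) (S : Set V) : Prop :=
  IsDomSet G S ∧ ∀ u ∈ S, ∃ v, v ∉ S ∧ G.Adj u v ∧ IsDomSet G (S \ {u} ∪ {v})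

/-- `D` is a double dominating set of `G`: every vertex outside `D` has at
least two neighbors in `D`. -/
def IsDoubleDomSet {V : Type*} (G : SimpleGraph V) (D : Set V) : Prop :=
  ∀ v ∉ D, 2 ≤ (G.neighborSet v ∩ D).ncard

private lemma dom_aux {V : Type*} [Fintype V] (G : SimpleGraph V)
    (D : Set V) (hD : IsDoubleDomSet G D) (u v : V) (huD : u ∈ D)
    (hvD : v ∉ D) (hadj : G.Adj u v) : IsDomSet G (D \ {u} ∪ {v}) := by
  intro x hx
  simp only [Set.mem_union, Set.mem_diff, Set.mem_singleton_iff, not_or, not_and, not_not] at hx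
  obtain ⟨hx1, hx2⟩ := hx
  by_cases hxu : x = u
  · subst hxu
    exact ⟨v, Or.inr rfl, hadj.symm⟩
  · have hxD : x ∉ D := fun h => hxu (hx1 h)
    have h2 := hD x hxD
    obtain ⟨y, hy, hyu⟩ := Set.exists_ne_of_one_lt_ncard (s := G.neighborSet x ∩ D) (by omega) u
    exact ⟨y, Or.inl ⟨hy.2, hyu⟩, hy.1.symm⟩

theorem stmt3 {V : Type*} [Fintype V] (G : SimpleGraph V)
    (hδ : ∀ v : V, 2 ≤ (G.neighborSet v).ncard)
    (D : Set V) (hD : IsDoubleDomSet G D)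
    (hmin : ∀ D' ⊂ D, ¬ IsDoubleDomSet G D') :
    IsCSDS G D := by
  have hdom : IsDomSet G D := by
    intro v hv
    have h2 := hD v hv
    obtain ⟨y, hy, -⟩ := Set.exists_ne_of_one_lt_ncard (s := G.neighborSet v ∩ D) (by omega) v
    exact ⟨y, hy.2, hy.1.symm⟩
  refine ⟨hdom, fun u hu => ?_⟩
  have hsub : D \ {u} ⊂ D := Set.sdiff_singleton_ssubset.mpr hu
  have hnd := hmin _ hsub
  simp only [IsDoubleDomSet, not_forall] at hnd
  obtain ⟨w, hw, hlt⟩ := hnd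
  rw [not_le] at hlt
  by_cases hwu : w = u
  · subst hwu
    -- w = u : u has at most one neighbor in D \ {u}, but degree ≥ 2
    have hnsub : ¬ (G.neighborSet w ⊆ D \ {w}) := by
      intro h
      have : G.neighborSet w ∩ (D \ {w}) = G.neighborSet w :=
        Set.inter_eq_left.mpr h
      rw [this] at hlt
      exact absurd (hδ w) (by omega)
    obtain ⟨v, hv1, hv2⟩ := Set.not_subset.mp hnsub
    have hadj : G.Adj w v := hv1
    have hvD : v ∉ D := by
      intro h
      exact hv2 ⟨h, fun heq => G.irrefl (heq ▸ hadj)⟩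
    exact ⟨v, hvD, hadj, dom_aux G D hD w v hu hvD hadj⟩
  · -- w ≠ u, w ∉ D
    have hwD : w ∉ D := by
      intro h
      exact hw ⟨h, hwu⟩
    have h2 := hD w hwD
    have hadj : G.Adj u w := by
      by_contra hna
      have hsub2 : G.neighborSet w ∩ D ⊆ G.neighborSet w ∩ (D \ {u}) := by
        rintro y ⟨hy1, hy2⟩
        refine ⟨hy1, hy2, fun heq => hna ?_⟩
        subst heq; exact hy1.symm
      have := Set.ncard_le_ncard hsub2 (Set.toFinite _)
      omega
    exact ⟨w, hwD, hadj, dom_aux G D hD u w hu hwD hadj⟩
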